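/- arXiv:1210.3115 — 3 statements merged into one kernel-verified Lean document; each statement's English description precedes it below -/
import Mathlib

section
/- In λ⟨catch⟩, if v is a value and Γ; Δ ⊢ v : ψ for an arrow-free type ψ, then FCV(v) = ∅, i.e. v contains no free continuation variables. -/
/-! Formalization of the λ⟨catch⟩ calculus (de Bruijn indices for both term
variables and continuation variables). -/

/-- Types: unit, lists, arrows. -/
inductive Ty : Type
  | unit : Ty
  | list : Ty → Ty
  | arrow : Ty → Ty → Ty
  deriving DecidableEq

/-- A type is arrow-free if the arrow constructor does not occur in it. -/
def Ty.ArrowFree : Ty → Prop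
  | .unit => True
  | .list σ => σ.ArrowFree
  | .arrow _ _ => False

/-- Terms of λ⟨catch⟩. Term variables and continuation variables are both
de Bruijn indices (`lam` binds a term variable, `catch` binds a continuation
variable). -/
inductive Tm : Type
  | var : ℕ → Tm
  | unit : Tm
  | nil : Tm
  | cons : Tm
  | lrec : Tm
  | lam : Tm → Tm
  | app : Tm → Tm → Tm
  | catch : Tm → Tm
  | throw : ℕ → Tm → Tm
  deriving DecidableEq

/-- Values of λ⟨catch⟩. -/
inductive IsValue : Tm → Prop
  | var (x) : IsValue (.var x)
  | unit : IsValue .unit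
  | nil : IsValue .nil
  | cons : IsValue .cons
  | cons1 {v} : IsValue v → IsValue (.app .cons v)
  | cons2 {v w} : IsValue v → IsValue w → IsValue (.app (.app .cons v) w)
  | lrec : IsValue .lrec
  | lrec1 {v} : IsValue v → IsValue (.app .lrec v)
  | lrec2 {v w} : IsValue v → IsValue w → IsValue (.app (.app .lrec v) w)
  | lam (t) : IsValue (.lam t)

/-- Boolean version of `IsValue`. -/
def isVal : Tm → Bool
  | .var _ => true
  | .unit => true
  | .nil => true
  | .cons => true
  | .lrec => true
  | .lam _ => true
  | .app .cons v => isVal v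
  | .app .lrec v => isVal v
  | .app (.app .cons v) w => isVal v && isVal w
  | .app (.app .lrec v) w => isVal v && isVal w
  | _ => false

/-- The set of free continuation variables of a term. -/
def FCV : Tm → Set ℕ
  | .var _ => ∅
  | .unit => ∅
  | .nil => ∅
  | .cons => ∅
  | .lrec => ∅
  | .lam t => FCV t
  | .app t s => FCV t ∪ FCV s
  | .catch t => {k | k + 1 ∈ FCV t}
  | .throw a t => insert a (FCV t)

/-- Boolean test whether continuation variable `k` occurs free. -/
def kfree (k : ℕ) : Tm → Bool
  | .var _ => false
  | .unit => false
  | .nil => false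
  | .cons => false
  | .lrec => false
  | .lam t => kfree k t
  | .app t s => kfree k t || kfree k s
  | .catch t => kfree (k + 1) t
  | .throw a t => a == k || kfree k t

/-- Lift a renaming under a binder. -/
def liftF (f : ℕ → ℕ) : ℕ → ℕ
  | 0 => 0
  | n + 1 => f n + 1

/-- Renaming of term variables. -/
def renameTm (f : ℕ → ℕ) : Tm → Tm
  | .var x => .var (f x)
  | .unit => .unit
  | .nil => .nil
  | .cons => .cons
  | .lrec => .lrec
  | .lam t => .lam (renameTm (liftF f) t)
  | .app t s => .app (renameTm f t) (renameTm f s)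
  | .catch t => .catch (renameTm f t)
  | .throw a t => .throw a (renameTm f t)

/-- Renaming of continuation variables. -/
def renameK (f : ℕ → ℕ) : Tm → Tm
  | .var x => .var x
  | .unit => .unit
  | .nil => .nil
  | .cons => .cons
  | .lrec => .lrec
  | .lam t => .lam (renameK f t)
  | .app t s => .app (renameK f t) (renameK f s)
  | .catch t => .catch (renameK (liftF f) t)
  | .throw a t => .throw (f a) (renameK f t)

/-- Lift a parallel term substitution under a `lam` binder. -/
def liftS (σ : ℕ → Tm) : ℕ → Tm
  | 0 => .var 0
  | n + 1 => renameTm Nat.succ (σ n)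

/-- Capture-avoiding parallel substitution of term variables. -/
def subst (σ : ℕ → Tm) : Tm → Tm
  | .var x => σ x
  | .unit => .unit
  | .nil => .nil
  | .cons => .cons
  | .lrec => .lrec
  | .lam t => .lam (subst (liftS σ) t)
  | .app t s => .app (subst σ t) (subst σ s)
  | .catch t => .catch (subst (fun n => renameK Nat.succ (σ n)) t)
  | .throw a t => .throw a (subst σ t)

/-- Capture-avoiding substitution `t[x := r]` of `r` for the term variable
bound at index 0. -/
def subst0 (t r : Tm) : Tm :=
  subst (fun n => match n with | 0 => r | n + 1 => .var n) t

/-- The typing judgment `Γ; Δ ⊢ t : ρ`.  `Γ` assigns types to term variables,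
`Δ` assigns (arrow-free) types to continuation variables. -/
inductive HasTy : List Ty → List Ty → Tm → Ty → Prop
  | var {Γ Δ x ρ} : Γ[x]? = some ρ → HasTy Γ Δ (.var x) ρ
  | unit {Γ Δ} : HasTy Γ Δ .unit .unit
  | nil {Γ Δ σ} : HasTy Γ Δ .nil (.list σ)
  | cons {Γ Δ σ} : HasTy Γ Δ .cons (.arrow σ (.arrow (.list σ) (.list σ)))
  | lrec {Γ Δ ρ σ} :
      HasTy Γ Δ .lrec
        (.arrow ρ (.arrow (.arrow σ (.arrow (.list σ) (.arrow ρ ρ))) (.arrow (.list σ) ρ)))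
  | lam {Γ Δ σ τ t} : HasTy (σ :: Γ) Δ t τ → HasTy Γ Δ (.lam t) (.arrow σ τ)
  | app {Γ Δ σ τ t s} : HasTy Γ Δ t (.arrow σ τ) → HasTy Γ Δ s σ → HasTy Γ Δ (.app t s) τ
  | catch {Γ Δ ψ t} : ψ.ArrowFree → HasTy Γ (ψ :: Δ) t ψ → HasTy Γ Δ (.catch t) ψ
  | throw {Γ Δ a ψ τ t} : Δ[a]? = some ψ → ψ.ArrowFree → HasTy Γ Δ t ψ →
      HasTy Γ Δ (.throw a t) τ

/-- One-step reduction of λ⟨catch⟩: the compatible closure of the basic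
reduction rules. -/
inductive Red : Tm → Tm → Prop
  | beta {t v} : IsValue v → Red (.app (.lam t) v) (subst0 t v)
  | throwAppL {a t s} : Red (.app (.throw a t) s) (.throw a t)
  | throwAppR {v a t} : IsValue v → Red (.app v (.throw a t)) (.throw a t)
  | throwThrow {b a t} : Red (.throw b (.throw a t)) (.throw a t)
  | catch1 {t} : Red (.catch (.throw 0 t)) (.catch t)
  | catch2 {b v} : IsValue v →
      Red (.catch (.throw (b + 1) (renameK Nat.succ v))) (.throw b v)
  | catch3 {v} : IsValue v → Red (.catch (renameK Nat.succ v)) v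
  | lrecNil {vr vs} : IsValue vr → IsValue vs →
      Red (.app (.app (.app .lrec vr) vs) .nil) vr
  | lrecCons {vr vs vh vt} : IsValue vr → IsValue vs → IsValue vh → IsValue vt →
      Red (.app (.app (.app .lrec vr) vs) (.app (.app .cons vh) vt))
          (.app (.app (.app vs vh) vt) (.app (.app (.app .lrec vr) vs) vt))
  | appL {t t' s} : Red t t' → Red (.app t s) (.app t' s)
  | appR {t s s'} : Red s s' → Red (.app t s) (.app t s')
  | lamC {t t'} : Red t t' → Red (.lam t) (.lam t')
  | catchC {t t'} : Red t t' → Red (.catch t) (.catch t')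
  | throwC {a t t'} : Red t t' → Red (.throw a t) (.throw a t')

/-- Compound contexts Ē ::= □ | Ē t | v Ē | throw α Ē. -/
inductive Ctx : Type
  | hole : Ctx
  | appL : Ctx → Tm → Ctx
  | appR : Tm → Ctx → Ctx
  | throw : ℕ → Ctx → Ctx

/-- Filling the hole of a compound context. -/
def Ctx.fill : Ctx → Tm → Tm
  | .hole, s => s
  | .appL E t, s => .app (E.fill s) t
  | .appR v E, s => .app v (E.fill s)
  | .throw a E, s => .throw a (E.fill s)

/-- Well-formedness of a compound context: the terms in `v Ē` positions must
be values. -/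
inductive Ctx.Ok : Ctx → Prop
  | hole : Ctx.Ok .hole
  | appL {E t} : Ctx.Ok E → Ctx.Ok (.appL E t)
  | appR {v E} : IsValue v → Ctx.Ok E → Ctx.Ok (.appR v E)
  | throw {a E} : Ctx.Ok E → Ctx.Ok (.throw a E)

/-- Parallel reduction `t ⇒ t'`. -/
inductive PRed : Tm → Tm → Prop
  | var (x) : PRed (.var x) (.var x)
  | unit : PRed .unit .unit
  | nil : PRed .nil .nil
  | cons : PRed .cons .cons
  | lrec : PRed .lrec .lrec
  | app {t t' r r'} : PRed t t' → PRed r r' → PRed (.app t r) (.app t' r')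
  | lam {t t'} : PRed t t' → PRed (.lam t) (.lam t')
  | catch {t t'} : PRed t t' → PRed (.catch t) (.catch t')
  | beta {t t' v r} : IsValue v → PRed t t' → PRed v r →
      PRed (.app (.lam t) v) (subst0 t' r)
  | throw {E a t t'} : Ctx.Ok E → PRed t t' →
      PRed (E.fill (.throw a t)) (.throw a t')
  | catch1 {t t'} : PRed t t' → PRed (.catch (.throw 0 t)) (.catch t')
  | catch2 {b v t} : IsValue v → PRed v t →
      PRed (.catch (.throw (b + 1) (renameK Nat.succ v))) (.throw b t)
  | catch3 {v t} : IsValue v → PRed v t → PRed (.catch (renameK Nat.succ v)) t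
  | lrecNil {vr vs r} : IsValue vr → IsValue vs → PRed vr r →
      PRed (.app (.app (.app .lrec vr) vs) .nil) r
  | lrecCons {vr vs vh vt r s h t} : IsValue vr → IsValue vs → IsValue vh → IsValue vt →
      PRed vr r → PRed vs s → PRed vh h → PRed vt t →
      PRed (.app (.app (.app .lrec vr) vs) (.app (.app .cons vh) vt))
           (.app (.app (.app s h) t) (.app (.app (.app .lrec r) s) t))

/-- Parallel reduction on compound contexts. -/
inductive CPred : Ctx → Ctx → Prop
  | hole : CPred .hole .hole
  | throwHole (a) : CPred (.throw a .hole) .hole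
  | appL {E F t t'} : CPred E F → PRed t t' → CPred (.appL E t) (.appL F t')
  | appR {v t E F} : IsValue v → CPred E F → PRed v t → CPred (.appR v E) (.appR t F)
  | throw {a E F} : CPred E F → CPred (.throw a E) (.throw a F)
  | throwThrow {b a E F} : CPred E F → CPred (.throw b (.throw a E)) (.throw a F)

/-- Size of a term. -/
def Tm.size : Tm → ℕ
  | .var _ => 1
  | .unit => 1
  | .nil => 1
  | .cons => 1
  | .lrec => 1
  | .lam t => t.size + 1
  | .app t s => t.size + s.size + 1
  | .catch t => t.size + 1
  | .throw _ t => t.size + 1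

theorem size_renameK (f : ℕ → ℕ) (t : Tm) : (renameK f t).size = t.size := by
  induction t generalizing f <;> simp [renameK, Tm.size, *]

/-- Does the term have the shape `throw a t`? -/
def isThrow : Tm → Bool
  | .throw _ _ => true
  | _ => false

/-- Does the term have the shape `Ē[throw a q]` for some compound context `Ē`? -/
def hasThrow : Tm → Bool
  | .throw _ _ => true
  | .app t s => hasThrow t || (isVal t && hasThrow s)
  | _ => false

/-- The complete development `t*` of a term `t`: all redexes of `t` are
contracted simultaneously. -/
def cd : Tm → Tm
  | .var x => .var x
  | .unit => .unit
  | .nil => .nil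
  | .cons => .cons
  | .lrec => .lrec
  | .lam t => .lam (cd t)
  | .throw a t => if isThrow t then cd t else .throw a (cd t)
  | .catch t =>
    match t with
    | .throw 0 q => .catch (cd q)
    | .throw (b + 1) u =>
        if isVal u && !kfree 0 u then .throw b (cd (renameK Nat.pred u))
        else .catch (cd (.throw (b + 1) u))
    | u =>
        if isVal u && !kfree 0 u then cd (renameK Nat.pred u)
        else .catch (cd u)
  | .app t s =>
    if hasThrow t then cd t
    else if isVal t && hasThrow s then cd s
    else match t, s with
      | .lam t', v => if isVal v then subst0 (cd t') (cd v) else .app (cd (.lam t')) (cd v)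
      | .app (.app .lrec vr) vs, .nil =>
          if isVal vr && isVal vs then cd vr
          else .app (cd (.app (.app .lrec vr) vs)) (cd .nil)
      | .app (.app .lrec vr) vs, .app (.app .cons vh) vt =>
          if isVal vr && isVal vs && isVal vh && isVal vt then
            .app (.app (.app (cd vs) (cd vh)) (cd vt))
                 (.app (.app (.app .lrec (cd vr)) (cd vs)) (cd vt))
          else .app (cd (.app (.app .lrec vr) vs)) (cd (.app (.app .cons vh) vt))
      | t, s => .app (cd t) (cd s)
  termination_by t => t.size
  decreasing_by all_goals (simp_all [Tm.size, size_renameK] <;> omega)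

/-- Strong normalization: every reduction sequence from `t` is finite. -/
def SN (t : Tm) : Prop := Acc (fun a b => Red b a) t

/-- The list interpretation `[S]` of a set of terms `S`. -/
inductive ListInt (S : Set Tm) : Tm → Prop
  | mk {t} :
      (∀ v w, IsValue v → IsValue w →
        Relation.ReflTransGen Red t (.app (.app .cons v) w) → v ∈ S) →
      (∀ v w, IsValue v → IsValue w →
        Relation.ReflTransGen Red t (.app (.app .cons v) w) → ListInt S w) →
      ListInt S t

/-- The reducibility interpretation `⟦σ⟧` of a type. -/
def interp : Ty → Set Tm
  | .unit => {t | SN t}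
  | .list σ => {t | SN t ∧ ListInt (interp σ) t}
  | .arrow σ τ => {t | ∀ s ∈ interp σ, Tm.app t s ∈ interp τ}

/-- A term is neutral if it is not of the shape `λx.r`, `lrec v_r v_s`, or
`cons v w`. -/
def Neutral (t : Tm) : Prop :=
  (∀ r, t ≠ .lam r) ∧
  (∀ vr vs, IsValue vr → IsValue vs → t ≠ .app (.app .lrec vr) vs) ∧
  (∀ v w, IsValue v → IsValue w → t ≠ .app (.app .cons v) w)

/-- Iterated application `t u₁ ⋯ uₙ`. -/
def appList (t : Tm) (us : List Tm) : Tm := us.foldl .app t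

/-- The term `cons w₁ (cons … (cons wₙ nil))`. -/
def listEnc : List Tm → Tm
  | [] => .nil
  | w :: ws => .app (.app .cons w) (listEnc ws)
/-- A well-typed value of arrow-free type has no free continuation variables. -/
theorem value_fcv_empty {Γ Δ : List Ty} {v : Tm} {ψ : Ty}
    (hv : IsValue v) (hψ : ψ.ArrowFree) (ht : HasTy Γ Δ v ψ) :
    FCV v = ∅ := by
  induction hv generalizing ψ with
  | var => rfl
  | unit => rfl
  | nil => rfl
  | cons => rfl
  | lrec => rfl
  | lam => cases ht; exact absurd hψ (by simp [Ty.ArrowFree])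
  | cons1 _ _ =>
    rcases ht with _ | _ | _ | _ | _ | _ | ⟨hc, _⟩
    cases hc; exact absurd hψ (by simp [Ty.ArrowFree])
  | lrec1 _ _ =>
    rcases ht with _ | _ | _ | _ | _ | _ | ⟨hc, _⟩
    cases hc; exact absurd hψ (by simp [Ty.ArrowFree])
  | cons2 _ _ ih1 ih2 =>
    rcases ht with _ | _ | _ | _ | _ | _ | ⟨hc, hw⟩
    rcases hc with _ | _ | _ | _ | _ | _ | ⟨hc2, hv2⟩
    cases hc2
    simp only [Ty.ArrowFree] at hψ
    simp [FCV, ih1 hψ hv2, ih2 (show Ty.ArrowFree (.list _) from hψ) hw]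
  | lrec2 _ _ _ _ =>
    rcases ht with _ | _ | _ | _ | _ | _ | ⟨hc, _⟩
    rcases hc with _ | _ | _ | _ | _ | _ | ⟨hc2, _⟩
    cases hc2; exact absurd hψ (by simp [Ty.ArrowFree])
end

section
/- In λ⟨catch⟩, for every arrow-free type ψ, every strongly normalizing term is reducible at ψ: SN ⊆ ⟦ψ⟧. -/
/-! Auxiliary lemmas -/

lemma sn_red {t u : Tm} (h : SN t) (r : Red t u) : SN u := h.inv r

lemma sn_reds {t u : Tm} (h : SN t) (r : Relation.ReflTransGen Red t u) : SN u := by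
  induction r with
  | refl => exact h
  | tail _ r ih => exact ih.inv r

lemma sn_appL {t s : Tm} (h : SN (.app t s)) : SN t := by
  have key : ∀ u, SN u → ∀ t s, u = Tm.app t s → SN t := by
    intro u h
    induction h with
    | intro u _ ih =>
      rintro t s rfl
      exact ⟨_, fun t' ht' => ih _ (Red.appL ht') t' s rfl⟩
  exact key _ h t s rfl

lemma sn_appR {t s : Tm} (h : SN (.app t s)) : SN s := by
  have key : ∀ u, SN u → ∀ t s, u = Tm.app t s → SN s := by
    intro u h
    induction h with
    | intro u _ ih =>
      rintro t s rfl
      exact ⟨_, fun s' hs' => ih _ (Red.appR hs') t s' rfl⟩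
  exact key _ h t s rfl

/-- One-step reduction of a value yields a value, and the `cons v w` shape is
preserved backwards. -/
lemma value_red_classify {w u : Tm} (hw : IsValue w) (h : Red w u) :
    IsValue u ∧ ∀ a b, u = .app (.app .cons a) b →
      ∃ a' b', w = .app (.app .cons a') b' ∧
        Relation.ReflTransGen Red a' a ∧ Relation.ReflTransGen Red b' b := by
  induction hw generalizing u with
  | var x => cases h
  | unit => cases h
  | nil => cases h
  | cons => cases h
  | lrec => cases h
  | lam t =>
      cases h with
      | lamC r => exact ⟨IsValue.lam _, fun a b hab => by cases hab⟩
  | cons1 hv ihv =>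
      cases h with
      | throwAppR hv' => cases hv
      | appL r => cases r
      | appR r =>
          exact ⟨IsValue.cons1 (ihv r).1, fun a b hab => by cases hab⟩
  | cons2 hv hx ihv ihx =>
      rename_i v x
      cases h with
      | throwAppR hv' => cases hx
      | appL r =>
          cases r with
          | appL r' => cases r'
          | appR r' =>
              refine ⟨IsValue.cons2 (ihv r').1 hx, ?_⟩
              rintro a b hab
              injection hab with h1 h2
              injection h1 with _ h3
              subst h2; subst h3
              exact ⟨v, x, rfl, Relation.ReflTransGen.single r', Relation.ReflTransGen.refl⟩
          | throwAppR _ => cases hv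
      | appR r =>
          refine ⟨IsValue.cons2 hv (ihx r).1, ?_⟩
          rintro a b hab
          injection hab with h1 h2
          injection h1 with _ h3
          subst h2; subst h3
          exact ⟨v, x, rfl, Relation.ReflTransGen.refl, Relation.ReflTransGen.single r⟩
  | lrec1 hv ihv =>
      cases h with
      | throwAppR hv' => cases hv
      | appL r => cases r
      | appR r =>
          exact ⟨IsValue.lrec1 (ihv r).1, fun a b hab => by
            injection hab with h1 h2; cases h1⟩
  | lrec2 hv hx ihv ihx =>
      cases h with
      | throwAppR hv' => cases hx
      | appL r =>
          cases r with
          | appL r' => cases r'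
          | appR r' =>
              exact ⟨IsValue.lrec2 (ihv r').1 hx, fun a b hab => by
                injection hab with h1 h2; injection h1 with h3 _; cases h3⟩
          | throwAppR _ => cases hv
      | appR r =>
          exact ⟨IsValue.lrec2 hv (ihx r).1, fun a b hab => by
            injection hab with h1 h2; injection h1 with h3 _; cases h3⟩

lemma isValue_reds {w u : Tm} (hw : IsValue w) (h : Relation.ReflTransGen Red w u) :
    IsValue u := by
  induction h with
  | refl => exact hw
  | tail _ r ih => exact (value_red_classify ih r).1

/-- If a value reduces (in many steps) to `cons v x`, it already has that shape. -/
lemma value_reds_cons {w : Tm} (hw : IsValue w) {u : Tm}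
    (h : Relation.ReflTransGen Red w u) :
    ∀ v x, u = .app (.app .cons v) x →
      ∃ a b, w = .app (.app .cons a) b ∧
        Relation.ReflTransGen Red a v ∧ Relation.ReflTransGen Red b x := by
  induction h with
  | refl =>
      rintro v x rfl
      exact ⟨v, x, rfl, Relation.ReflTransGen.refl, Relation.ReflTransGen.refl⟩
  | tail h' r ih =>
      rintro v x rfl
      obtain ⟨a', b', rfl, ha', hb'⟩ :=
        (value_red_classify (isValue_reds hw h') r).2 v x rfl
      obtain ⟨a, b, rfl, ha, hb⟩ := ih a' b' rfl
      exact ⟨a, b, rfl, ha.trans ha', hb.trans hb'⟩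

lemma listInt_reds {S : Set Tm} {t u : Tm} (h : ListInt S t)
    (r : Relation.ReflTransGen Red t u) : ListInt S u := by
  obtain ⟨h1, h2⟩ := h
  exact ListInt.mk (fun v w hv hw hr => h1 v w hv hw (r.trans hr))
    (fun v w hv hw hr => h2 v w hv hw (r.trans hr))

lemma size_pos (t : Tm) : 1 ≤ t.size := by
  cases t <;> simp [Tm.size]

lemma listInt_of_value (S : Set Tm) (hS : ∀ v, SN v → v ∈ S) :
    ∀ n w, w.size ≤ n → IsValue w → SN w → ListInt S w := by
  intro n
  induction n with
  | zero => intro w hsz; exact absurd hsz (by have := size_pos w; omega)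
  | succ n ih =>
      intro w hsz hw hsn
      refine ListInt.mk ?_ ?_
      · intro v x hv hx hr
        obtain ⟨a, b, rfl, ha, hb⟩ := value_reds_cons hw hr v x rfl
        exact hS v (sn_reds (sn_appR (sn_appL hsn)) ha)
      · intro v x hv hx hr
        obtain ⟨a, b, rfl, ha, hb⟩ := value_reds_cons hw hr v x rfl
        have hbv : IsValue b := by cases hw with | cons2 h1 h2 => exact h2
        have hbsz : b.size ≤ n := by simp [Tm.size] at hsz; omega
        exact listInt_reds (ih b hbsz hbv (sn_appR hsn)) hb

lemma listInt_of_sn (S : Set Tm) (hS : ∀ v, SN v → v ∈ S) (t : Tm) (h : SN t) :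
    ListInt S t := by
  refine ListInt.mk ?_ ?_
  · intro v x hv hx hr
    exact hS v (sn_appR (sn_appL (sn_reds h hr)))
  · intro v x hv hx hr
    exact listInt_of_value S hS x.size x le_rfl hx (sn_appR (sn_reds h hr))

/-- For arrow-free types, every strongly normalizing term is reducible. -/
theorem sn_subset_interp_arrowFree {ψ : Ty} (hψ : ψ.ArrowFree) :
    {t : Tm | SN t} ⊆ interp ψ := by
  induction ψ with
  | unit => intro t ht; exact ht
  | list σ ih =>
      intro t ht
      exact ⟨ht, listInt_of_sn _ (fun v hv => ih hψ hv) t ht⟩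
  | arrow σ τ ih1 ih2 => exact absurd hψ (by simp [Ty.ArrowFree])
end

section
/- In λ⟨catch⟩, for every type σ, if r ∈ SN and u₁,…,uₙ is a finite sequence of strongly normalizing terms, then the applied term (throw α r) u₁ ⋯ uₙ is in ⟦σ⟧ (in particular it is strongly normalizing). -/
/-! Auxiliary development for `throw_app_interp`. -/

/-- The head of an application spine. -/
def headTm : Tm → Tm
  | .app t _ => headTm t
  | t => t

lemma appList_nil (t : Tm) : appList t [] = t := rfl

lemma appList_cons (t u : Tm) (us : List Tm) :
    appList t (u :: us) = appList (.app t u) us := rfl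

lemma appList_snoc (t u : Tm) (us : List Tm) :
    appList t (us ++ [u]) = .app (appList t us) u := by
  simp [appList]

lemma head_appList (us : List Tm) (t : Tm) : headTm (appList t us) = headTm t := by
  induction us generalizing t with
  | nil => rfl
  | cons u us ih => rw [appList_cons, ih]; rfl

lemma headTm_value {v : Tm} (hv : IsValue v) : ∀ a r, headTm v ≠ .throw a r := by
  induction hv <;> intro a r <;> simp [headTm]

lemma appList_app_ne_throw : ∀ (us : List Tm) (p q : Tm) (b : ℕ) (t : Tm),
    appList (.app p q) us ≠ .throw b t := by
  intro us
  induction us with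
  | nil => intro p q b t h; exact Tm.noConfusion h
  | cons u us ih => intro p q b t h; exact ih _ _ _ _ h

/-- Inversion for reductions of `throw a r`. -/
lemma red_throw {a : ℕ} {r t' : Tm} (h : Red (.throw a r) t') :
    ∃ b q, t' = .throw b q := by
  cases h with
  | throwThrow => exact ⟨_, _, rfl⟩
  | throwC h' => exact ⟨_, _, rfl⟩

/-- `SN` is preserved by `throw`. -/
lemma sn_throw {r : Tm} (hr : SN r) (a : ℕ) : SN (.throw a r) := by
  induction hr with
  | intro r h ih =>
    constructor
    intro t' ht'
    cases ht' with
    | throwThrow => exact ⟨_, h⟩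
    | throwC h' => exact ih _ h'

/-- One-step relation on argument lists: drop the head, or reduce one element. -/
inductive LRed : List Tm → List Tm → Prop
  | head {u us} : LRed us (u :: us)
  | here {u u' us} : Red u u' → LRed (u' :: us) (u :: us)
  | there {u us us'} : LRed us' us → LRed (u :: us') (u :: us)

lemma acc_LRed_cons : ∀ u : Tm, SN u → ∀ us : List Tm, Acc LRed us →
    Acc LRed (u :: us) := by
  intro u hu
  induction hu with
  | intro u h ihu =>
    intro us hus
    induction hus with
    | intro us h2 ihus =>
      constructor
      intro y hy
      cases hy with
      | head => exact ⟨us, h2⟩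
      | here hr => exact ihu _ hr us ⟨us, h2⟩
      | there hl => exact ihus _ hl

lemma acc_LRed {us : List Tm} (hus : ∀ u ∈ us, SN u) : Acc LRed us := by
  induction us with
  | nil => constructor; intro y hy; cases hy
  | cons u us ih =>
    exact acc_LRed_cons u (hus u (by simp)) us (ih (fun v hv => hus v (by simp [hv])))

lemma LRed_snoc {us' us : List Tm} (u : Tm) (h : LRed us' us) :
    LRed (us' ++ [u]) (us ++ [u]) := by
  induction h with
  | head => exact .head
  | here hr => exact .here hr
  | there _ ih => exact .there ih

lemma LRed_snoc_here : ∀ (us : List Tm) {u u' : Tm}, Red u u' →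
    LRed (us ++ [u']) (us ++ [u]) := by
  intro us
  induction us with
  | nil => intro u u' h; exact .here h
  | cons v vs ih => intro u u' h; exact .there (ih h)

/-- Inversion lemma: reductions of `appList (throw a r) us`. -/
lemma red_appList : ∀ (us : List Tm) {a : ℕ} {r t' : Tm},
    Red (appList (.throw a r) us) t' →
    (∃ s', Red (.throw a r) s' ∧ t' = appList s' us) ∨
    (∃ us', LRed us' us ∧ t' = appList (.throw a r) us') := by
  intro us
  induction us using List.reverseRecOn with
  | nil => intro a r t' h; exact .inl ⟨t', h, rfl⟩
  | append_singleton us u ih =>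
    intro a r t' h
    rw [appList_snoc] at h
    generalize hp : appList (.throw a r) us = p at h
    have hhead : headTm p = .throw a r := by rw [← hp, head_appList]; rfl
    cases h with
    | beta hv => simp [headTm] at hhead
    | throwAppL =>
      rcases us with _ | ⟨v, vs⟩
      · cases hp
        exact .inr ⟨[], .head, rfl⟩
      · rw [appList_cons] at hp
        exact absurd hp (appList_app_ne_throw _ _ _ _ _)
    | throwAppR hv => exact absurd hhead (headTm_value hv a r)
    | lrecNil hvr hvs => simp [headTm] at hhead
    | lrecCons hvr hvs hvh hvt => simp [headTm] at hhead
    | appL h' =>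
      subst hp
      rcases ih h' with ⟨s', hs, rfl⟩ | ⟨us', hl, rfl⟩
      · exact .inl ⟨s', hs, (appList_snoc _ _ _).symm⟩
      · exact .inr ⟨us' ++ [u], LRed_snoc u hl, (appList_snoc _ _ _).symm⟩
    | appR h' =>
      subst hp
      exact .inr ⟨us ++ [_], LRed_snoc_here us h', (appList_snoc _ _ _).symm⟩

lemma sn_appList : ∀ s : Tm, SN s → (∃ a r, s = .throw a r) →
    ∀ us : List Tm, Acc LRed us → SN (appList s us) := by
  intro s hs
  induction hs with
  | intro s h ihs =>
    intro hthrow us hus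
    obtain ⟨a, r, rfl⟩ := hthrow
    induction hus with
    | intro us h2 ihus =>
      constructor
      intro t' ht'
      rcases red_appList us ht' with ⟨s', hstep, rfl⟩ | ⟨us', hl, rfl⟩
      · exact ihs s' hstep (red_throw hstep) us ⟨us, h2⟩
      · exact ihus us' hl

lemma sn_throw_appList (a : ℕ) {r : Tm} (hr : SN r) (us : List Tm)
    (hus : ∀ u ∈ us, SN u) : SN (appList (.throw a r) us) :=
  sn_appList _ (sn_throw hr a) ⟨a, r, rfl⟩ us (acc_LRed hus)

/-- Any reduct of `appList (throw a r) us` has the same shape. -/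
lemma reach_shape {a : ℕ} {r : Tm} {us : List Tm} {t : Tm}
    (h : Relation.ReflTransGen Red (appList (.throw a r) us) t) :
    ∃ b q us', t = appList (.throw b q) us' := by
  induction h with
  | refl => exact ⟨a, r, us, rfl⟩
  | tail h1 h2 ih =>
    obtain ⟨b, q, us', rfl⟩ := ih
    rcases red_appList us' h2 with ⟨s', hs, rfl⟩ | ⟨us'', _, rfl⟩
    · obtain ⟨c, p, rfl⟩ := red_throw hs
      exact ⟨c, p, us', rfl⟩
    · exact ⟨b, q, us'', rfl⟩

lemma shape_ne_cons {b : ℕ} {q : Tm} {us : List Tm} {v w : Tm} :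
    appList (.throw b q) us ≠ .app (.app .cons v) w := by
  intro h
  have : headTm (appList (.throw b q) us) = .throw b q := by rw [head_appList]; rfl
  rw [h] at this
  simp [headTm] at this

lemma sn_unit : SN .unit := by
  constructor; intro t h; cases h

lemma sn_app_left : ∀ p : Tm, SN p → ∀ t s : Tm, p = .app t s → SN t := by
  intro p hp
  induction hp with
  | intro p h ih =>
    intro t s rfl'
    subst rfl'
    constructor
    intro t' ht'
    exact ih (.app t' s) (Red.appL ht') t' s rfl

lemma interp_main : ∀ σ : Ty, (∀ t ∈ interp σ, SN t) ∧
    (∀ (a : ℕ) (r : Tm) (us : List Tm), SN r → (∀ u ∈ us, SN u) →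
      appList (.throw a r) us ∈ interp σ) := by
  intro σ
  induction σ with
  | unit =>
    refine ⟨fun t ht => ht, fun a r us hr hus => ?_⟩
    exact sn_throw_appList a hr us hus
  | list σ ih =>
    refine ⟨fun t ht => ht.1, fun a r us hr hus => ?_⟩
    refine ⟨sn_throw_appList a hr us hus, ?_⟩
    constructor
    · intro v w hv hw hred
      obtain ⟨b, q, us', heq⟩ := reach_shape hred
      exact absurd heq.symm shape_ne_cons
    · intro v w hv hw hred
      obtain ⟨b, q, us', heq⟩ := reach_shape hred
      exact absurd heq.symm shape_ne_cons
  | arrow σ τ ihσ ihτ =>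
    constructor
    · intro t ht
      have hs : (.throw 0 .unit : Tm) ∈ interp σ := by
        have := ihσ.2 0 .unit [] sn_unit (by simp)
        simpa [appList] using this
      have := ihτ.1 _ (ht _ hs)
      exact sn_app_left _ this _ _ rfl
    · intro a r us hr hus
      intro s hs
      rw [show Tm.app (appList (.throw a r) us) s = appList (.throw a r) (us ++ [s]) from
        (appList_snoc _ _ _).symm]
      refine ihτ.2 a r (us ++ [s]) hr ?_
      intro u hu
      rcases List.mem_append.1 hu with h | h
      · exact hus u h
      · simp only [List.mem_singleton] at h; rw [h]; exact ihσ.1 s hs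

/-- A throw of a strongly normalizing term, applied to a sequence of strongly
normalizing terms, is reducible at every type. -/
theorem throw_app_interp (σ : Ty) {a : ℕ} {r : Tm} (hr : SN r)
    (us : List Tm) (hus : ∀ u ∈ us, SN u) :
    appList (Tm.throw a r) us ∈ interp σ :=
  (interp_main σ).2 a r us hr hus
end
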